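/- Let n ∈ ℕ, let I be any index set, and let (X_i)_{i∈I} be a family of path-connected Hausdorff topological spaces such that for all but finitely many i ∈ I, every continuous map S^n → X_i is inessential (i.e. X_i has trivial n-th homotopy group). Then for a point x = (x_i)_{i∈I} of the product Π_{i∈I} X_i (with the product topology), x is a π_n-wild point of Π_{i∈I} X_i if and only if there exists i ∈ I such that x_i is a π_n-wild point of X_i. -/

import Mathlib

open Filter Topology

/-- The unit `n`-sphere in `ℝ^(n+1)`. -/
abbrev Sph (n : ℕ) : Type :=
  Metric.sphere (0 : EuclideanSpace ℝ (Fin (n + 1))) 1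

/-- The basepoint `s₀ = (1,0,…,0)` of the unit `n`-sphere. -/
noncomputable def spherePt (n : ℕ) : Sph n :=
  ⟨EuclideanSpace.single 0 1, by
    simp [mem_sphere_zero_iff_norm, EuclideanSpace.norm_single]⟩

/-- A continuous map `S^n → X` is essential if it is not homotopic to a constant map. -/
def Essential {n : ℕ} {X : Type*} [TopologicalSpace X] (f : C(Sph n, X)) : Prop :=
  ∀ x : X, ¬ f.Homotopic (ContinuousMap.const (Sph n) x)

/-- `x` is a `π_n`-wild point of `X` if there is a sequence of essential maps
`S^n → X` based at `x` converging to the constant map at `x` in the compact-open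
topology. -/
def IsWildPoint (n : ℕ) {X : Type*} [TopologicalSpace X] (x : X) : Prop :=
  ∃ f : ℕ → C(Sph n, X),
    (∀ k, f k (spherePt n) = x) ∧
    (∀ k, Essential (f k)) ∧
    Tendsto f atTop (𝓝 (ContinuousMap.const (Sph n) x))

/-- The `π_n`-wild set of `X`. -/
def wildSet (n : ℕ) (X : Type*) [TopologicalSpace X] : Set X :=
  {x | IsWildPoint n x}

/-- A continuous map is `π_n`-injective if precomposition reflects inessentiality. -/
def PiNInjective (n : ℕ) {X Y : Type*} [TopologicalSpace X] [TopologicalSpace Y]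
    (f : C(X, Y)) : Prop :=
  ∀ g : C(Sph n, X),
    (∃ y : Y, (f.comp g).Homotopic (ContinuousMap.const (Sph n) y)) →
    ∃ x : X, g.Homotopic (ContinuousMap.const (Sph n) x)

/-- `X` is `π_n`-rigid at `x`. -/
def IsRigidAt (n : ℕ) {X : Type*} [TopologicalSpace X] (x : X) : Prop :=
  ∃ f : ℕ → C(Sph n, X),
    (∀ k, f k (spherePt n) = x) ∧
    (∀ k, Essential (f k)) ∧
    Tendsto f atTop (𝓝 (ContinuousMap.const (Sph n) x)) ∧
    ∀ β : C(unitInterval, X), β 0 = x →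
      ∀ H : ℕ → C(Sph n × unitInterval, X),
        (∀ k s, H k (s, 0) = f k s) →
        (∀ k t, H k (spherePt n, t) = β t) →
        Tendsto H atTop (𝓝 (β.comp (ContinuousMap.snd (α := Sph n)))) →
        β 1 = x

/-- wild points of a product where all but finitely many factors
have trivial `n`-th homotopy group. -/
theorem stmt10 {I : Type*} (n : ℕ) (X : I → Type*)
    [∀ i, TopologicalSpace (X i)] [∀ i, T2Space (X i)] [∀ i, PathConnectedSpace (X i)]
    (hfin : {i : I | ∃ g : C(Sph n, X i), Essential g}.Finite)
    (x : ∀ i, X i) :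
    IsWildPoint n x ↔ ∃ i, IsWildPoint n (x i) := by
  classical
  constructor
  · rintro ⟨f, hbase, hess, htend⟩
    -- each f k has an essential component
    have key : ∀ k, ∃ i, Essential ((ContinuousMap.eval i).comp (f k)) := by
      intro k
      by_contra h
      push_neg at h
      have h' : ∀ i, ∃ y : X i,
          ((ContinuousMap.eval i).comp (f k)).Homotopic (ContinuousMap.const (Sph n) y) := by
        intro i
        have := h i
        unfold Essential at this
        push_neg at this
        exact this
      choose y hy using h'
      have hpi : (ContinuousMap.pi fun i => (ContinuousMap.eval i).comp (f k)).Homotopic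
          (ContinuousMap.pi fun i => ContinuousMap.const (Sph n) (y i)) :=
        ContinuousMap.Homotopic.pi hy
      have e1 : (ContinuousMap.pi fun i => (ContinuousMap.eval i).comp (f k)) = f k := by
        ext s i; rfl
      have e2 : (ContinuousMap.pi fun i => ContinuousMap.const (Sph n) (y i)) =
          ContinuousMap.const (Sph n) y := by
        ext s i; rfl
      rw [e1, e2] at hpi
      exact hess k y hpi
    choose j hj using key
    have hjmem : ∀ k, j k ∈ {i : I | ∃ g : C(Sph n, X i), Essential g} := by
      intro k
      exact ⟨_, hj k⟩
    -- some index occurs frequently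
    have hfreq : ∃ i, ∃ᶠ k in atTop, Essential ((ContinuousMap.eval i).comp (f k)) := by
      by_contra h
      push_neg at h
      have hev : ∀ᶠ k in atTop, ∀ i ∈ {i : I | ∃ g : C(Sph n, X i), Essential g},
          ¬ Essential ((ContinuousMap.eval i).comp (f k)) :=
        (Filter.eventually_all_finite hfin).2 fun i _ => h i
      rcases hev.exists with ⟨k, hk⟩
      exact hk (j k) (hjmem k) (hj k)
    obtain ⟨i, hfreqi⟩ := hfreq
    obtain ⟨φ, hφmono, hφ⟩ := Filter.extraction_of_frequently_atTop hfreqi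
    refine ⟨i, fun m => (ContinuousMap.eval i).comp (f (φ m)), ?_, ?_, ?_⟩
    · intro m; simp [hbase (φ m)]
    · intro m; exact hφ m
    · have hc := (ContinuousMap.continuous_postcomp
        (ContinuousMap.eval i : C(∀ j, X j, X i))).tendsto (ContinuousMap.const (Sph n) x)
      exact hc.comp (htend.comp hφmono.tendsto_atTop)
  · rintro ⟨i, f, hbase, hess, htend⟩
    have hcont : Continuous fun y : X i => Function.update x i y :=
      continuous_const.update i continuous_id
    set e : C(X i, ∀ j, X j) := ⟨fun y => Function.update x i y, hcont⟩ with he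
    have hproj : ∀ g : C(Sph n, X i), (ContinuousMap.eval i).comp (e.comp g) = g := by
      intro g; ext s; simp [he]
    refine ⟨fun k => e.comp (f k), ?_, ?_, ?_⟩
    · intro k
      show Function.update x i (f k (spherePt n)) = x
      rw [hbase k, Function.update_eq_self]
    · intro k y hy
      have : ((ContinuousMap.eval i).comp (e.comp (f k))).Homotopic
          ((ContinuousMap.eval i).comp (ContinuousMap.const (Sph n) y)) :=
        ContinuousMap.Homotopic.comp (ContinuousMap.Homotopic.refl _) hy
      rw [hproj] at this
      exact hess k (y i) this
    · have heq : e.comp (ContinuousMap.const (Sph n) (x i)) =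
          ContinuousMap.const (Sph n) x := by
        ext s j
        show Function.update x i (x i) j = x j
        rw [Function.update_eq_self]
      have hc := (ContinuousMap.continuous_postcomp e).tendsto
        (ContinuousMap.const (Sph n) (x i))
      rw [heq] at hc
      exact hc.comp htend
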